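/- For every p ≥ 1, β > 0, every finite Λ ⊂ ℤ² with zero boundary condition, every contour γ with Λ_γ ⊆ Λ and every integer h ≥ 1, the p-SOS measure with floor at 0 satisfies barπ^{p,0}_Λ(C_{γ,h} ∩ {η_x ≥ 1 for all x ∈ Λ_γ}) ≤ exp(−β|γ|). -/

import Mathlib

open scoped BigOperators Classical

noncomputable section

namespace PSOS

/-- Sites of the square lattice `ℤ²`. -/
abbrev Site : Type := ℤ × ℤ

/-- The nearest-neighbour edges incident to `x`, each written in its normalized
(right/up oriented) form, so that every unordered pair appears in a unique way. -/
def edgesAt (x : Site) : Finset (Site × Site) :=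
  {(x, (x.1 + 1, x.2)), (x, (x.1, x.2 + 1)),
   ((x.1 - 1, x.2), x), ((x.1, x.2 - 1), x)}

/-- Nearest-neighbour edges of `ℤ²` with at least one endpoint in `Λ`,
each unordered pair appearing exactly once. -/
def edges (Λ : Finset Site) : Finset (Site × Site) := Λ.biUnion edgesAt

/-- Extension `ξ` of a configuration `η : Λ → ℤ` by the boundary condition `φ` off `Λ`. -/
def extend (Λ : Finset Site) (φ : Site → ℤ) (η : Λ → ℤ) : Site → ℤ :=
  fun x => if h : x ∈ Λ then η ⟨x, h⟩ else φ x

/-- The `p`-SOS Hamiltonian `H^{p,φ}_Λ` on `Λ` with boundary condition `φ`. -/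
def ham (p : ℝ) (Λ : Finset Site) (φ : Site → ℤ) (η : Λ → ℤ) : ℝ :=
  ∑ e ∈ edges Λ, (|extend Λ φ η e.1 - extend Λ φ η e.2| : ℝ) ^ p

/-- Boltzmann weight `exp(-β H^{p,φ}_Λ(η))`. -/
def weight (p β : ℝ) (Λ : Finset Site) (φ : Site → ℤ) (η : Λ → ℤ) : ℝ :=
  Real.exp (-β * ham p Λ φ η)

/-- Finite-volume Gibbs probability `hatπ^{p,φ}_Λ(A)` of an event `A ⊆ ℤ^Λ`. -/
def gibbs (p β : ℝ) (Λ : Finset Site) (φ : Site → ℤ) (A : Set (Λ → ℤ)) : ℝ :=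
  (∑' η : A, weight p β Λ φ η) / (∑' η : (Λ → ℤ), weight p β Λ φ η)

/-- Gibbs expectation of an observable under `hatπ^{p,φ}_Λ`. -/
def gibbsExp (p β : ℝ) (Λ : Finset Site) (φ : Site → ℤ) (f : (Λ → ℤ) → ℝ) : ℝ :=
  (∑' η : (Λ → ℤ), f η * weight p β Λ φ η) / (∑' η : (Λ → ℤ), weight p β Λ φ η)

/-- The floor event `{η : η_x ≥ 0 for all x ∈ Λ}`. -/
def floorSet (Λ : Finset Site) : Set (Λ → ℤ) := {η | ∀ x, 0 ≤ η x}

/-- The event `{η : 0 ≤ η_x ≤ n for all x ∈ Λ}` (floor at `0`, ceiling at `n`). -/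
def boxSet (Λ : Finset Site) (n : ℕ) : Set (Λ → ℤ) :=
  {η | ∀ x, 0 ≤ η x ∧ η x ≤ (n : ℤ)}

/-- `barπ^{p,0}_Λ`: the Gibbs measure with zero boundary condition conditioned
on the floor event. -/
def barGibbs (p β : ℝ) (Λ : Finset Site) (A : Set (Λ → ℤ)) : ℝ :=
  gibbs p β Λ 0 (A ∩ floorSet Λ) / gibbs p β Λ 0 (floorSet Λ)

/-- `π^{p,0}_Λ`: the Gibbs measure with zero boundary condition conditioned on
having floor at `0` and ceiling at `n`. -/
def ceilGibbs (p β : ℝ) (Λ : Finset Site) (n : ℕ) (A : Set (Λ → ℤ)) : ℝ :=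
  gibbs p β Λ 0 (A ∩ boxSet Λ n) / gibbs p β Λ 0 (boxSet Λ n)

/-- The nearest-neighbour graph on `ℤ²`. -/
def nbrGraph : SimpleGraph Site where
  Adj x y := (x.1 - y.1).natAbs + (x.2 - y.2).natAbs = 1
  symm := ⟨by intro x y hxy; (try simp only at hxy ⊢); omega⟩
  loopless := ⟨by intro x h; (try simp only at h ⊢); omega⟩

/-- The four nearest neighbours of a site. -/
def nbrs (x : Site) : Finset Site :=
  {(x.1 + 1, x.2), (x.1 - 1, x.2), (x.1, x.2 + 1), (x.1, x.2 - 1)}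

/-- A contour `γ` of the dual lattice `(ℤ²)*`, identified with the finite region
`Λ_γ ⊆ ℤ²` of sites it encloses: the region is nonempty and connected with
connected complement, so that its edge boundary is a single closed dual circuit
(consistently with the standard linking rule at dual vertices). -/
structure Contour where
  interior : Finset Site
  nonempty : interior.Nonempty
  conn : (nbrGraph.induce (interior : Set Site)).Connected
  coconn : (nbrGraph.induce ((interior : Set Site)ᶜ)).Connected

/-- The nearest-neighbour edges crossing the boundary of `S`, oriented from
inside to outside; these correspond to the bonds of the dual circuit bounding `S`. -/
def bdryEdges (S : Finset Site) : Finset (Site × Site) :=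
  S.biUnion fun x => ((nbrs x).filter fun y => y ∉ S).image fun y => (x, y)

/-- `|γ|`: the number of bonds of the contour `γ`. -/
def Contour.len (γ : Contour) : ℕ := (bdryEdges γ.interior).card

/-- `∂⁺_γ`: sites of the interior adjacent to the exterior. -/
def innerBdry (S : Finset Site) : Finset Site :=
  S.filter fun x => ∃ y ∈ nbrs x, y ∉ S

/-- `∂⁻_γ`: sites of the exterior adjacent to the interior. -/
def outerBdry (S : Finset Site) : Finset Site :=
  (S.biUnion nbrs).filter fun y => y ∉ S

/-- The event `C_{γ,h}` that `γ` is an `h`-contour: the extended configuration `ξ`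
is at least `h` on `∂⁺_γ` and at most `h - 1` on `∂⁻_γ`. -/
def contourEvent (Λ : Finset Site) (φ : Site → ℤ) (γ : Contour) (h : ℤ) :
    Set (Λ → ℤ) :=
  {η | (∀ x ∈ innerBdry γ.interior, h ≤ extend Λ φ η x) ∧
       (∀ y ∈ outerBdry γ.interior, extend Λ φ η y ≤ h - 1)}

/-- The map `T_γ` lowering the configuration by `1` inside the contour `γ`. -/
def lower (Λ : Finset Site) (γ : Contour) (η : Λ → ℤ) : Λ → ℤ :=
  fun x => if (x : Site) ∈ γ.interior then η x - 1 else η x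

/-- An event is increasing if it is upward closed for the pointwise order. -/
def IncrEvent (Λ : Finset Site) (E : Set (Λ → ℤ)) : Prop :=
  ∀ η η' : Λ → ℤ, (∀ x, η x ≤ η' x) → η ∈ E → η' ∈ E


/-! ### Auxiliary lemmas for Statement 14 -/

lemma mem_nbrs {x y : Site} :
    y ∈ nbrs x ↔ y = (x.1 + 1, x.2) ∨ y = (x.1 - 1, x.2) ∨
      y = (x.1, x.2 + 1) ∨ y = (x.1, x.2 - 1) := by
  simp [nbrs]

lemma nbrs_symm {x y : Site} (hxy : y ∈ nbrs x) : x ∈ nbrs y := by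
  rw [mem_nbrs] at hxy ⊢
  rcases hxy with rfl | rfl | rfl | rfl <;> simp [Prod.ext_iff] <;> omega

lemma mem_bdryEdges {S : Finset Site} {e : Site × Site} :
    e ∈ bdryEdges S ↔ e.1 ∈ S ∧ e.2 ∈ nbrs e.1 ∧ e.2 ∉ S := by
  obtain ⟨a, b⟩ := e
  simp only [bdryEdges, Finset.mem_biUnion, Finset.mem_image, Finset.mem_filter]
  constructor
  · rintro ⟨x, hx, y, ⟨hy1, hy2⟩, hxy⟩
    obtain ⟨rfl, rfl⟩ := Prod.mk.injEq .. ▸ hxy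
    exact ⟨hx, hy1, hy2⟩
  · rintro ⟨ha, hb1, hb2⟩
    exact ⟨a, ha, b, ⟨hb1, hb2⟩, rfl⟩

lemma mem_edges_iff {Λ : Finset Site} {e : Site × Site} :
    e ∈ edges Λ ↔ (e.1 ∈ Λ ∨ e.2 ∈ Λ) ∧
      (e.2 = (e.1.1 + 1, e.1.2) ∨ e.2 = (e.1.1, e.1.2 + 1)) := by
  obtain ⟨a, b⟩ := e
  simp only [edges, edgesAt, Finset.mem_biUnion, Finset.mem_insert, Finset.mem_singleton]
  constructor
  · rintro ⟨x, hx, hcase⟩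
    rcases hcase with heq | heq | heq | heq <;>
      · rw [Prod.mk.injEq] at heq
        obtain ⟨rfl, rfl⟩ := heq
        simp [Prod.ext_iff, hx]
  · rintro ⟨hmem, hform | hform⟩ <;> rcases hmem with hmem | hmem
    · exact ⟨a, hmem, Or.inl (by rw [hform])⟩
    · refine ⟨b, hmem, Or.inr (Or.inr (Or.inl ?_))⟩
      subst hform; simp [Prod.ext_iff] <;> omega
    · exact ⟨a, hmem, Or.inr (Or.inl (by rw [hform]))⟩
    · refine ⟨b, hmem, Or.inr (Or.inr (Or.inr ?_))⟩
      subst hform; simp [Prod.ext_iff] <;> omega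

lemma form_mem_nbrs {a b : Site}
    (hf : b = (a.1 + 1, a.2) ∨ b = (a.1, a.2 + 1)) : b ∈ nbrs a := by
  rw [mem_nbrs]; tauto

/-- Whether an edge crosses the boundary of `S`. -/
def crossing (S : Finset Site) (e : Site × Site) : Prop :=
  (e.1 ∈ S ∧ e.2 ∉ S) ∨ (e.1 ∉ S ∧ e.2 ∈ S)

/-- Normalise an inside-to-outside boundary edge into its right/up oriented form. -/
def normEdge (e : Site × Site) : Site × Site :=
  if e.2 = (e.1.1 + 1, e.1.2) ∨ e.2 = (e.1.1, e.1.2 + 1) then e else (e.2, e.1)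

lemma normEdge_cases (e : Site × Site) : normEdge e = e ∨ normEdge e = (e.2, e.1) := by
  unfold normEdge; split <;> simp

/-- The contour length counts exactly the normalized edges of `Λ` crossing `∂Λ_γ`. -/
lemma len_eq_card_crossing (Λ : Finset Site) (γ : Contour) (hγ : γ.interior ⊆ Λ) :
    γ.len = ((edges Λ).filter (crossing γ.interior)).card := by
  classical
  refine Finset.card_bij (fun e _ => normEdge e) ?_ ?_ ?_
  · intro e he
    rw [mem_bdryEdges] at he
    obtain ⟨h1, h2, h3⟩ := he
    rw [mem_nbrs] at h2
    show normEdge e ∈ (edges Λ).filter (crossing γ.interior)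
    rw [Finset.mem_filter]
    rcases h2 with hb | hb | hb | hb
    · have : normEdge e = e := by unfold normEdge; rw [if_pos (Or.inl hb)]
      rw [this]
      exact ⟨mem_edges_iff.2 ⟨Or.inl (hγ h1), Or.inl hb⟩, Or.inl ⟨h1, h3⟩⟩
    · have hn : normEdge e = (e.2, e.1) := by
        unfold normEdge
        rw [if_neg]
        rw [hb]; simp [Prod.ext_iff] <;> omega
      rw [hn]
      refine ⟨mem_edges_iff.2 ⟨Or.inr (hγ h1), Or.inl ?_⟩, Or.inr ⟨h3, h1⟩⟩
      rw [hb]; simp [Prod.ext_iff] <;> omega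
    · have : normEdge e = e := by unfold normEdge; rw [if_pos (Or.inr hb)]
      rw [this]
      exact ⟨mem_edges_iff.2 ⟨Or.inl (hγ h1), Or.inr hb⟩, Or.inl ⟨h1, h3⟩⟩
    · have hn : normEdge e = (e.2, e.1) := by
        unfold normEdge
        rw [if_neg]
        rw [hb]; simp [Prod.ext_iff] <;> omega
      rw [hn]
      refine ⟨mem_edges_iff.2 ⟨Or.inr (hγ h1), Or.inr ?_⟩, Or.inr ⟨h3, h1⟩⟩
      rw [hb]; simp [Prod.ext_iff] <;> omega
  · intro e1 he1 e2 he2 heq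
    rw [mem_bdryEdges] at he1 he2
    have hq : normEdge e1 = normEdge e2 := heq
    rcases normEdge_cases e1 with h1 | h1 <;> rcases normEdge_cases e2 with h2 | h2 <;>
      rw [h1, h2] at hq
    · exact hq
    · have hc : e1.1 = e2.2 := by rw [hq]
      exact absurd (hc ▸ he1.1) he2.2.2
    · have hc : e1.2 = e2.1 := by rw [← hq]
      exact (he1.2.2 (by rw [hc]; exact he2.1)).elim
    · have h11 : e1.1 = e2.1 := by have := congrArg Prod.snd hq; simpa using this
      have h12 : e1.2 = e2.2 := by have := congrArg Prod.fst hq; simpa using this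
      exact Prod.ext_iff.2 ⟨h11, h12⟩
  · intro b hb
    rw [Finset.mem_filter] at hb
    obtain ⟨hbe, hcross⟩ := hb
    rw [mem_edges_iff] at hbe
    rcases hcross with ⟨hin, hout⟩ | ⟨hout, hin⟩
    · refine ⟨b, mem_bdryEdges.2 ⟨hin, form_mem_nbrs hbe.2, hout⟩, ?_⟩
      show normEdge b = b
      unfold normEdge; rw [if_pos hbe.2]
    · refine ⟨(b.2, b.1), mem_bdryEdges.2 ⟨hin, nbrs_symm (form_mem_nbrs hbe.2), hout⟩, ?_⟩
      show normEdge (b.2, b.1) = b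
      unfold normEdge
      rw [if_neg]
      rcases hbe.2 with hf | hf <;> (rw [hf]; simp [Prod.ext_iff] <;> omega)

lemma rpow_sub_one_add_one_le {p : ℝ} (hp : 1 ≤ p) {b : ℝ} (hb : 0 ≤ b) :
    b ^ p + 1 ≤ (b + 1) ^ p := by
  have h := NNReal.add_rpow_le_rpow_add (Real.toNNReal b) 1 hp
  have h2 := NNReal.coe_le_coe.mpr h
  rw [NNReal.coe_add, NNReal.coe_rpow, NNReal.coe_rpow, NNReal.coe_rpow, Real.coe_toNNReal _ hb] at h2
  simpa [max_eq_left hb] using h2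

lemma extend_lower (Λ : Finset Site) (γ : Contour) (hγ : γ.interior ⊆ Λ)
    (η : Λ → ℤ) (x : Site) :
    extend Λ 0 (lower Λ γ η) x
      = extend Λ 0 η x - (if x ∈ γ.interior then 1 else 0) := by
  unfold extend lower
  by_cases hx : x ∈ Λ
  · simp only [hx, dif_pos]
    split <;> ring
  · have hni : x ∉ γ.interior := fun hm => hx (hγ hm)
    simp [hx, hni]

lemma ham_lower_le (p : ℝ) (hp : 1 ≤ p) (Λ : Finset Site) (γ : Contour)
    (hγ : γ.interior ⊆ Λ) (h : ℤ) (η : Λ → ℤ)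
    (h1 : ∀ x ∈ innerBdry γ.interior, h ≤ extend Λ 0 η x)
    (h2 : ∀ y ∈ outerBdry γ.interior, extend Λ 0 η y ≤ h - 1) :
    ham p Λ 0 (lower Λ γ η) + (γ.len : ℝ) ≤ ham p Λ 0 η := by
  classical
  have hcard : (γ.len : ℝ)
      = ∑ e ∈ edges Λ, (if crossing γ.interior e then (1 : ℝ) else 0) := by
    rw [len_eq_card_crossing Λ γ hγ]
    exact (Finset.sum_boole (p := crossing γ.interior) (s := edges Λ)).symm
  rw [hcard]
  unfold ham
  rw [← Finset.sum_add_distrib]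
  refine Finset.sum_le_sum ?_
  intro e he
  rw [mem_edges_iff] at he
  have hnbr : e.2 ∈ nbrs e.1 := form_mem_nbrs he.2
  set a := extend Λ 0 η e.1 with ha
  set b := extend Λ 0 η e.2 with hbdef
  rw [extend_lower Λ γ hγ η e.1, extend_lower Λ γ hγ η e.2, ← ha, ← hbdef]
  have eab : ((a : ℝ)) - ((b : ℝ)) = ((a - b : ℤ) : ℝ) := by push_cast; ring
  by_cases hx1 : e.1 ∈ γ.interior <;> by_cases hx2 : e.2 ∈ γ.interior
  · have hc : ¬ crossing γ.interior e := by unfold crossing; tauto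
    rw [if_neg hc, if_pos hx1, if_pos hx2, add_zero]
    have heq : ((a - 1 : ℤ) : ℝ) - ((b - 1 : ℤ) : ℝ) = (a : ℝ) - (b : ℝ) := by
      push_cast; ring
    rw [heq]
  · have hc : crossing γ.interior e := Or.inl ⟨hx1, hx2⟩
    rw [if_pos hc, if_pos hx1, if_neg hx2]
    have hin : e.1 ∈ innerBdry γ.interior :=
      Finset.mem_filter.2 ⟨hx1, ⟨e.2, hnbr, hx2⟩⟩
    have hout : e.2 ∈ outerBdry γ.interior :=
      Finset.mem_filter.2 ⟨Finset.mem_biUnion.2 ⟨e.1, hx1, hnbr⟩, hx2⟩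
    have hA : h ≤ a := h1 _ hin
    have hB : b ≤ h - 1 := h2 _ hout
    have he1 : ((a - 1 : ℤ) : ℝ) - ((b - 0 : ℤ) : ℝ) = ((a - b - 1 : ℤ) : ℝ) := by
      push_cast; ring
    rw [he1, eab]
    have habs1 : |((a - b - 1 : ℤ) : ℝ)| = ((a - b - 1 : ℤ) : ℝ) :=
      abs_of_nonneg (by exact_mod_cast (by omega : (0 : ℤ) ≤ a - b - 1))
    have habs2 : |((a - b : ℤ) : ℝ)| = ((a - b : ℤ) : ℝ) :=
      abs_of_nonneg (by exact_mod_cast (by omega : (0 : ℤ) ≤ a - b))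
    rw [habs1, habs2]
    have hkey := rpow_sub_one_add_one_le hp
      (b := ((a - b - 1 : ℤ) : ℝ)) (by exact_mod_cast (by omega : (0 : ℤ) ≤ a - b - 1))
    have hrw : ((a - b - 1 : ℤ) : ℝ) + 1 = ((a - b : ℤ) : ℝ) := by push_cast; ring
    rw [hrw] at hkey
    exact hkey
  · have hc : crossing γ.interior e := Or.inr ⟨hx1, hx2⟩
    rw [if_pos hc, if_neg hx1, if_pos hx2]
    have hin : e.2 ∈ innerBdry γ.interior :=
      Finset.mem_filter.2 ⟨hx2, ⟨e.1, nbrs_symm hnbr, hx1⟩⟩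
    have hout : e.1 ∈ outerBdry γ.interior :=
      Finset.mem_filter.2 ⟨Finset.mem_biUnion.2 ⟨e.2, hx2, nbrs_symm hnbr⟩, hx1⟩
    have hA : h ≤ b := h1 _ hin
    have hB : a ≤ h - 1 := h2 _ hout
    have he1 : ((a - 0 : ℤ) : ℝ) - ((b - 1 : ℤ) : ℝ) = -(((b - a - 1 : ℤ)) : ℝ) := by
      push_cast; ring
    rw [he1, abs_neg, eab]
    have habs1 : |((b - a - 1 : ℤ) : ℝ)| = ((b - a - 1 : ℤ) : ℝ) :=
      abs_of_nonneg (by exact_mod_cast (by omega : (0 : ℤ) ≤ b - a - 1))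
    have habs2 : |((a - b : ℤ) : ℝ)| = ((b - a : ℤ) : ℝ) := by
      rw [abs_of_nonpos (by exact_mod_cast (by omega : (a - b : ℤ) ≤ 0))]
      push_cast; ring
    rw [habs1, habs2]
    have hkey := rpow_sub_one_add_one_le hp
      (b := ((b - a - 1 : ℤ) : ℝ)) (by exact_mod_cast (by omega : (0 : ℤ) ≤ b - a - 1))
    have hrw : ((b - a - 1 : ℤ) : ℝ) + 1 = ((b - a : ℤ) : ℝ) := by push_cast; ring
    rw [hrw] at hkey
    exact hkey
  · have hc : ¬ crossing γ.interior e := by unfold crossing; tauto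
    rw [if_neg hc, if_neg hx1, if_neg hx2, add_zero]
    have heq : ((a - 0 : ℤ) : ℝ) - ((b - 0 : ℤ) : ℝ) = (a : ℝ) - (b : ℝ) := by
      push_cast; ring
    rw [heq]

/-- Peierls bound with floor, positive interior: for `h ≥ 1`,
`barπ^{p,0}_Λ(C_{γ,h} ∩ {η_x ≥ 1 ∀ x ∈ Λ_γ}) ≤ exp(-β|γ|)`. -/
theorem statement_14 (p β : ℝ) (hp : 1 ≤ p) (hβ : 0 < β)
    (Λ : Finset Site) (γ : Contour) (hγ : γ.interior ⊆ Λ) (h : ℤ) (hh : 1 ≤ h) :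
    barGibbs p β Λ
        (contourEvent Λ 0 γ h ∩
          {η : Λ → ℤ | ∀ x : Λ, (x : Site) ∈ γ.interior → 1 ≤ η x}) ≤
      Real.exp (-β * (γ.len : ℝ)) := by
  classical
  unfold barGibbs gibbs
  set A : Set (Λ → ℤ) :=
    (contourEvent Λ 0 γ h ∩
        {η : Λ → ℤ | ∀ x : Λ, (x : Site) ∈ γ.interior → 1 ≤ η x}) ∩ floorSet Λ with hAdef
  have hWpos : ∀ η : Λ → ℤ, 0 < weight p β Λ 0 η := fun η => Real.exp_pos _
  by_cases hsum : Summable (weight p β Λ 0)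
  · have hZpos : 0 < ∑' η : (Λ → ℤ), weight p β Λ 0 η :=
      Summable.tsum_pos hsum (fun η => (hWpos η).le) (fun _ => 0) (hWpos _)
    have hSA : Summable (fun η : ↥A => weight p β Λ 0 ↑η) := hsum.subtype _
    have hSF : Summable (fun η : ↥(floorSet Λ) => weight p β Λ 0 ↑η) := hsum.subtype _
    have h0F : (0 : Λ → ℤ) ∈ floorSet Λ := fun _ => le_rfl
    have hSFpos : 0 < ∑' η : ↥(floorSet Λ), weight p β Λ 0 ↑η :=
      Summable.tsum_pos hSF (fun η => (hWpos _).le) ⟨0, h0F⟩ (hWpos _)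
    have hTmem : ∀ η : ↥A, lower Λ γ ↑η ∈ floorSet Λ := by
      rintro ⟨η, ⟨hC, hpos⟩, hfl⟩ x
      by_cases hx : (x : Site) ∈ γ.interior
      · have h1 := hpos x hx
        simp only [lower, hx, if_pos]
        omega
      · have h0 := hfl x
        simp only [lower, hx, if_neg, if_false]
        omega
    set T : ↥A → ↥(floorSet Λ) := fun η => ⟨lower Λ γ ↑η, hTmem η⟩ with hTdef
    have hTinj : Function.Injective T := by
      intro η1 η2 hT
      have hl : lower Λ γ ↑η1 = lower Λ γ ↑η2 := congrArg Subtype.val hT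
      apply Subtype.ext; funext x
      have hx' := congrFun hl x
      by_cases hx : (x : Site) ∈ γ.interior <;>
        simp only [lower, hx, if_pos, if_neg, if_false] at hx' <;> omega
    have hkey : ∀ η : ↥A,
        Real.exp (β * (γ.len : ℝ)) * weight p β Λ 0 ↑η
          ≤ weight p β Λ 0 (lower Λ γ ↑η) := by
      rintro ⟨η, ⟨hC, _⟩, _⟩
      have hham := ham_lower_le p hp Λ γ hγ h η hC.1 hC.2
      unfold weight
      rw [← Real.exp_add]
      apply Real.exp_le_exp.2
      have hmul := mul_le_mul_of_nonneg_left hham hβ.le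
      nlinarith
    have hcomp : Real.exp (β * (γ.len : ℝ)) * (∑' η : ↥A, weight p β Λ 0 ↑η)
        ≤ ∑' η : ↥(floorSet Λ), weight p β Λ 0 ↑η := by
      rw [← tsum_mul_left]
      exact Summable.tsum_le_tsum_of_inj T hTinj (fun c _ => (hWpos _).le) hkey
        (hSA.mul_left _) hSF
    rw [div_div_div_comm, div_self hZpos.ne', div_one, div_le_iff₀ hSFpos]
    have hexp : Real.exp (-β * (γ.len : ℝ)) * Real.exp (β * (γ.len : ℝ)) = 1 := by
      rw [← Real.exp_add, neg_mul, neg_add_cancel, Real.exp_zero]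
    calc (∑' η : ↥A, weight p β Λ 0 ↑η)
        = Real.exp (-β * (γ.len : ℝ))
            * (Real.exp (β * (γ.len : ℝ)) * ∑' η : ↥A, weight p β Λ 0 ↑η) := by
          rw [← mul_assoc, hexp, one_mul]
      _ ≤ Real.exp (-β * (γ.len : ℝ)) * ∑' η : ↥(floorSet Λ), weight p β Λ 0 ↑η :=
          mul_le_mul_of_nonneg_left hcomp (Real.exp_nonneg _)
  · rw [tsum_eq_zero_of_not_summable hsum]
    simp only [div_zero, zero_div]
    exact (Real.exp_pos _).le

end PSOS
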